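/- Let p be a prime number and let A be a commutative ring with bounded p^∞-torsion, with bound N. Then for every ν ≥ 1, the canonical ring map from A to its p-adic completion Â restricts to a bijection from the p^ν-torsion subgroup A[p^ν] = {a ∈ A : p^ν·a = 0} onto the p^ν-torsion subgroup Â[p^ν] = {x ∈ Â : p^ν·x = 0}. -/

import Mathlib

open AdicCompletion Submodule


/-- **Bounded `p^∞`-torsion and `p`-adic completion.**
Let `p` be a prime and `A` a commutative ring with bounded `p^∞`-torsion with bound `N`
(every element of `A` killed by some power of `p` is killed by `p^N`).  Then for every
`ν ≥ 1` the canonical map from `A` to its `p`-adic completion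
`Â = AdicCompletion (Ideal.span {p}) A` restricts to a bijection from the `p^ν`-torsion
of `A` onto the `p^ν`-torsion of `Â`. -/
theorem padicCompletion_torsion_bijOn
    (p : ℕ) (hp : p.Prime) (A : Type*) [CommRing A] (N : ℕ)
    (hbd : ∀ a : A, (∃ ν : ℕ, (p : A) ^ ν * a = 0) → (p : A) ^ N * a = 0)
    (ν : ℕ) (hν : 1 ≤ ν) :
    Set.BijOn (algebraMap A (AdicCompletion (Ideal.span {(p : A)}) A))
      {a : A | (p : A) ^ ν * a = 0}
      {x : AdicCompletion (Ideal.span {(p : A)}) A |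
        (p : AdicCompletion (Ideal.span {(p : A)}) A) ^ ν * x = 0} := by
  set I : Ideal A := Ideal.span {(p : A)} with hIdef
  set C := AdicCompletion I A with hCdef
  -- membership in I^n • ⊤
  have hmem : ∀ (n : ℕ) (b : A), b ∈ (I ^ n • ⊤ : Submodule A A) ↔ ∃ c, b = (p:A)^n * c := by
    intro n b
    rw [smul_eq_mul, Ideal.mul_top, hIdef, Ideal.span_singleton_pow, Ideal.mem_span_singleton]
    exact ⟨fun ⟨c, hc⟩ => ⟨c, hc⟩, fun ⟨c, hc⟩ => ⟨c, hc⟩⟩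
  -- key torsion fact
  have hkill : ∀ a s : A, (p:A)^ν * a = 0 → a = (p:A)^N * s → a = 0 := by
    intro a s ha hs
    have h1 : (p:A)^(ν+N) * s = 0 := by
      rw [pow_add, mul_assoc, ← hs]; exact ha
    have h2 := hbd s ⟨ν+N, h1⟩
    rw [hs, h2]
  -- uniqueness at level N
  have huniq : ∀ a a' : A, (p:A)^ν * a = 0 → (p:A)^ν * a' = 0 →
      (Submodule.Quotient.mk a : A ⧸ (I ^ N • ⊤ : Submodule A A)) = Submodule.Quotient.mk a' →
      a = a' := by
    intro a a' ha ha' h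
    obtain ⟨s, hs⟩ := (hmem N _).mp ((Submodule.Quotient.eq _).mp h)
    have : a - a' = 0 := hkill (a - a') s (by rw [mul_sub, ha, ha', sub_zero]) hs
    exact sub_eq_zero.mp this
  -- mul vs smul on the completion
  have hms : ∀ x : C, (p : C)^ν * x = ((p:A)^ν) • x := by
    intro x
    rw [Algebra.smul_def, map_pow, map_natCast]
  -- transition maps fix constants
  have htm : ∀ {m n : ℕ} (h : m ≤ n) (b : A),
      transitionMap I A h (Submodule.Quotient.mk b) = Submodule.Quotient.mk b := by
    intro m n h b
    simpa using transitionMap_mk I A h b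
  -- existence of torsion lifts at each level
  have hex : ∀ (x : C), ((p:A)^ν) • x = 0 → ∀ k : ℕ,
      ∃ a : A, (p:A)^ν * a = 0 ∧
        (Submodule.Quotient.mk a : A ⧸ (I ^ k • ⊤ : Submodule A A)) = x.val k := by
    intro x hx k
    obtain ⟨b, hb⟩ := Submodule.Quotient.mk_surjective _ (x.val (k+ν))
    have h0 : ((p:A)^ν) • x.val (k+ν) = 0 := by
      have := congrArg (fun y => AdicCompletion.eval I A (k+ν) y) hx
      simp only [_root_.map_smul, _root_.map_zero] at this
      exact this
    rw [← hb, ← Submodule.Quotient.mk_smul, Submodule.Quotient.mk_eq_zero] at h0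
    obtain ⟨c, hc⟩ := (hmem (k+ν) _).mp h0
    rw [smul_eq_mul] at hc
    refine ⟨b - (p:A)^k * c, ?_, ?_⟩
    · rw [mul_sub, hc, ← mul_assoc, ← pow_add]
      ring_nf
    · rw [← x.property (show k ≤ k+ν by omega), ← hb, htm]
      rw [Submodule.Quotient.eq]
      exact (hmem k _).mpr ⟨-c, by ring⟩
  refine ⟨?_, ?_, ?_⟩
  · intro a ha
    show (p : C)^ν * (algebraMap A C a) = 0
    have : (p : C)^ν * algebraMap A C a = algebraMap A C ((p:A)^ν * a) := by
      rw [map_mul, map_pow, map_natCast]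
    rw [this, ha, _root_.map_zero]
  · intro a ha a' ha' h
    refine huniq a a' ha ha' ?_
    exact congrArg (fun y => y.val N) h
  · intro x hx
    have hx' : ((p:A)^ν) • x = 0 := by rw [← hms]; exact hx
    obtain ⟨a, ha, haN⟩ := hex x hx' N
    refine ⟨a, ha, ?_⟩
    refine AdicCompletion.ext (fun n => ?_)
    obtain ⟨a', ha', ha'n⟩ := hex x hx' (max n N)
    have heq : a = a' := by
      refine huniq a a' ha ha' ?_
      rw [haN, ← x.property (le_max_right n N), ← ha'n, htm]
    show Submodule.Quotient.mk a = x.val n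
    rw [heq, ← x.property (le_max_left n N), ← ha'n, htm]
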